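/- Let A be a 4-by-4 reciprocal matrix. There exist real numbers X, c and p ≠ 0 such that det(Re(e^{iθ}A) − λI₄) = λ⁴ − 2λ²((X² + p²)cos²θ + c²) + ((X² − p²)cos²θ + c²)² for all θ, λ ∈ ℝ if and only if ξ₂ = 0 and ξ₁ = ξ₃. Moreover, in that case the identity holds with X = √5/2, p = 1/2 and c = √ξ₁. (This is the criterion for the Kippenhahn curve of A to consist of two ellipses symmetric to each other about the origin.) -/

import Mathlib

open Matrix Polynomial

/-- A tridiagonal complex matrix with zero main diagonal whose symmetric
off-diagonal entries have pairwise products equal to one. -/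
def IsReciprocal {n : ℕ} (A : Matrix (Fin n) (Fin n) ℂ) : Prop :=
  (∀ i j : Fin n, ((i : ℤ) - (j : ℤ)) ^ 2 ≠ 1 → A i j = 0) ∧
  ∀ i j : Fin n, (j : ℕ) = (i : ℕ) + 1 → A i j * A j i = 1

/-- The Hermitian matrix `Re (e^{iθ} A) = (e^{iθ}A + (e^{iθ}A)*)/2`. -/
noncomputable def RePart {n : ℕ} (θ : ℝ) (A : Matrix (Fin n) (Fin n) ℂ) :
    Matrix (Fin n) (Fin n) ℂ :=
  (2 : ℂ)⁻¹ • (Complex.exp (θ * Complex.I) • A + (Complex.exp (θ * Complex.I) • A)ᴴ)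

private lemma tri_det' (lam x1 y1 x2 y2 x3 y3 : ℂ) :
    Matrix.det !![-lam, x1, 0, 0; y1, -lam, x2, 0; 0, y2, -lam, x3; 0, 0, y3, -lam]
      = lam^4 - lam^2*(x1*y1 + x2*y2 + x3*y3) + (x1*y1)*(x3*y3) := by
  have hs : Fin.succAbove (1 : Fin 4) (2 : Fin 3) = 3 := by decide
  simp [Matrix.det_succ_row_zero, Fin.sum_univ_succ, hs]; ring

private lemma pair_lemma' (θ : ℝ) (u v : ℂ) (huv : u * v = 1) :
    (2⁻¹ * (Complex.exp (θ*Complex.I) * u + (starRingEnd ℂ) (Complex.exp (θ*Complex.I)) * (starRingEnd ℂ) v))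
    * (2⁻¹ * (Complex.exp (θ*Complex.I) * v + (starRingEnd ℂ) (Complex.exp (θ*Complex.I)) * (starRingEnd ℂ) u))
    = ((Real.cos θ^2 + (‖u‖ - ‖v‖)^2/4 : ℝ) : ℂ) := by
  set e := Complex.exp (↑θ*Complex.I) with hedef
  have heabs : ‖e‖ = 1 := Complex.norm_exp_ofReal_mul_I θ
  have he1 : e * (starRingEnd ℂ) e = 1 := by
    rw [Complex.mul_conj, Complex.normSq_eq_norm_sq, heabs]; norm_num
  have he2 : e^2 + ((starRingEnd ℂ) e)^2 = ((4*Real.cos θ^2 - 2 : ℝ) : ℂ) := by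
    have h2 : e^2 = Complex.exp ((2*θ : ℝ) * Complex.I) := by
      rw [hedef, sq, ← Complex.exp_add]; push_cast; ring_nf
    rw [← map_pow, h2, Complex.add_conj, Complex.exp_ofReal_mul_I_re, Real.cos_two_mul]
    push_cast; ring
  have hcuv : (starRingEnd ℂ) u * (starRingEnd ℂ) v = 1 := by
    rw [← _root_.map_mul, huv]; simp
  have huu : u * (starRingEnd ℂ) u = ((‖u‖ : ℂ))^2 := by
    rw [Complex.mul_conj, Complex.normSq_eq_norm_sq]; push_cast; ring
  have hvv : v * (starRingEnd ℂ) v = ((‖v‖ : ℂ))^2 := by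
    rw [Complex.mul_conj, Complex.normSq_eq_norm_sq]; push_cast; ring
  have habs : (‖u‖ : ℂ) * (‖v‖ : ℂ) = 1 := by
    rw [← Complex.ofReal_mul, ← norm_mul, huv]; simp
  push_cast at he2 ⊢
  linear_combination (e^2/4) * huv + (((starRingEnd ℂ) e)^2/4) * hcuv
    + ((e*(starRingEnd ℂ) e)/4)*huu + ((e*(starRingEnd ℂ) e)/4)*hvv
    + (((‖u‖:ℂ)^2 + (‖v‖:ℂ)^2)/4)*he1 + (1/4)*he2 + (1/2)*habs

set_option maxHeartbeats 2000000 in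
/-- Criterion for the Kippenhahn curve of a 4-by-4 reciprocal matrix to consist of
two ellipses symmetric to each other about the origin. -/
theorem two_noncentral_ellipses_four (A : Matrix (Fin 4) (Fin 4) ℂ) (hA : IsReciprocal A)
    (ξ₁ ξ₂ ξ₃ : ℝ)
    (h1 : ξ₁ = (‖A 0 1‖ - ‖A 1 0‖) ^ 2 / 4)
    (h2 : ξ₂ = (‖A 1 2‖ - ‖A 2 1‖) ^ 2 / 4)
    (h3 : ξ₃ = (‖A 2 3‖ - ‖A 3 2‖) ^ 2 / 4) :
    ((∃ X c p : ℝ, p ≠ 0 ∧ ∀ θ lam : ℝ,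
      (RePart θ A - (lam : ℂ) • 1).det =
        ((lam ^ 4 - 2 * lam ^ 2 * ((X ^ 2 + p ^ 2) * Real.cos θ ^ 2 + c ^ 2)
            + ((X ^ 2 - p ^ 2) * Real.cos θ ^ 2 + c ^ 2) ^ 2 : ℝ) : ℂ)) ↔
      (ξ₂ = 0 ∧ ξ₁ = ξ₃)) ∧
    (ξ₂ = 0 ∧ ξ₁ = ξ₃ → ∀ θ lam : ℝ,
      (RePart θ A - (lam : ℂ) • 1).det =
        ((lam ^ 4
            - 2 * lam ^ 2 * (((Real.sqrt 5 / 2) ^ 2 + (1 / 2) ^ 2) * Real.cos θ ^ 2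
              + Real.sqrt ξ₁ ^ 2)
            + (((Real.sqrt 5 / 2) ^ 2 - (1 / 2) ^ 2) * Real.cos θ ^ 2
              + Real.sqrt ξ₁ ^ 2) ^ 2 : ℝ) : ℂ)) := by
  obtain ⟨hz, hp⟩ := hA
  have z00 : A 0 0 = 0 := hz 0 0 (by decide)
  have z11 : A 1 1 = 0 := hz 1 1 (by decide)
  have z22 : A 2 2 = 0 := hz 2 2 (by decide)
  have z33 : A 3 3 = 0 := hz 3 3 (by decide)
  have z02 : A 0 2 = 0 := hz 0 2 (by decide)
  have z20 : A 2 0 = 0 := hz 2 0 (by decide)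
  have z03 : A 0 3 = 0 := hz 0 3 (by decide)
  have z30 : A 3 0 = 0 := hz 3 0 (by decide)
  have z13 : A 1 3 = 0 := hz 1 3 (by decide)
  have z31 : A 3 1 = 0 := hz 3 1 (by decide)
  have p1 : A 0 1 * A 1 0 = 1 := hp 0 1 rfl
  have p2 : A 1 2 * A 2 1 = 1 := hp 1 2 rfl
  have p3 : A 2 3 * A 3 2 = 1 := hp 2 3 rfl
  have hξ₁0 : 0 ≤ ξ₁ := h1 ▸ by positivity
  have hξ₂0 : 0 ≤ ξ₂ := h2 ▸ by positivity
  have hξ₃0 : 0 ≤ ξ₃ := h3 ▸ by positivity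
  have master : ∀ θ lam : ℝ, (RePart θ A - (lam : ℂ) • 1).det =
      ((lam ^ 4 - lam ^ 2 * ((Real.cos θ^2 + ξ₁) + (Real.cos θ^2 + ξ₂) + (Real.cos θ^2 + ξ₃))
        + (Real.cos θ^2 + ξ₁) * (Real.cos θ^2 + ξ₃) : ℝ) : ℂ) := by
    intro θ lam
    have hM : RePart θ A - (lam : ℂ) • 1 =
      !![-(lam:ℂ),
         2⁻¹ * (Complex.exp (θ*Complex.I) * A 0 1 + (starRingEnd ℂ) (Complex.exp (θ*Complex.I)) * (starRingEnd ℂ) (A 1 0)), 0, 0;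
         2⁻¹ * (Complex.exp (θ*Complex.I) * A 1 0 + (starRingEnd ℂ) (Complex.exp (θ*Complex.I)) * (starRingEnd ℂ) (A 0 1)), -(lam:ℂ),
         2⁻¹ * (Complex.exp (θ*Complex.I) * A 1 2 + (starRingEnd ℂ) (Complex.exp (θ*Complex.I)) * (starRingEnd ℂ) (A 2 1)), 0;
         0,
         2⁻¹ * (Complex.exp (θ*Complex.I) * A 2 1 + (starRingEnd ℂ) (Complex.exp (θ*Complex.I)) * (starRingEnd ℂ) (A 1 2)), -(lam:ℂ),
         2⁻¹ * (Complex.exp (θ*Complex.I) * A 2 3 + (starRingEnd ℂ) (Complex.exp (θ*Complex.I)) * (starRingEnd ℂ) (A 3 2));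
         0, 0,
         2⁻¹ * (Complex.exp (θ*Complex.I) * A 3 2 + (starRingEnd ℂ) (Complex.exp (θ*Complex.I)) * (starRingEnd ℂ) (A 2 3)), -(lam:ℂ)] := by
      ext i j
      fin_cases i <;> fin_cases j <;>
        simp [RePart, Matrix.add_apply, Matrix.smul_apply, Matrix.conjTranspose_apply,
          Matrix.one_apply, smul_eq_mul, z00, z11, z22, z33, z02, z20, z03, z30, z13, z31,
          mul_comm, Matrix.vecHead, Matrix.vecTail] <;> ring_nf
    rw [hM, tri_det', pair_lemma' θ (A 0 1) (A 1 0) p1, pair_lemma' θ (A 1 2) (A 2 1) p2,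
      pair_lemma' θ (A 2 3) (A 3 2) p3, ← h1, ← h2, ← h3]
    push_cast
    ring
  have second : (ξ₂ = 0 ∧ ξ₁ = ξ₃) → ∀ θ lam : ℝ,
      (RePart θ A - (lam : ℂ) • 1).det =
        ((lam ^ 4
            - 2 * lam ^ 2 * (((Real.sqrt 5 / 2) ^ 2 + (1 / 2) ^ 2) * Real.cos θ ^ 2
              + Real.sqrt ξ₁ ^ 2)
            + (((Real.sqrt 5 / 2) ^ 2 - (1 / 2) ^ 2) * Real.cos θ ^ 2
              + Real.sqrt ξ₁ ^ 2) ^ 2 : ℝ) : ℂ) := by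
    rintro ⟨hc2, hc13⟩ θ lam
    rw [master θ lam]
    norm_cast
    rw [div_pow, Real.sq_sqrt (by norm_num : (0:ℝ) ≤ 5), Real.sq_sqrt hξ₁0, hc2, ← hc13]
    ring
  constructor
  · constructor
    · rintro ⟨X, c, p, hp0, hid⟩
      have key : ∀ θ lam : ℝ,
          lam ^ 4 - lam ^ 2 * ((Real.cos θ^2 + ξ₁) + (Real.cos θ^2 + ξ₂) + (Real.cos θ^2 + ξ₃))
            + (Real.cos θ^2 + ξ₁) * (Real.cos θ^2 + ξ₃)
          = lam ^ 4 - 2 * lam ^ 2 * ((X ^ 2 + p ^ 2) * Real.cos θ ^ 2 + c ^ 2)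
            + ((X ^ 2 - p ^ 2) * Real.cos θ ^ 2 + c ^ 2) ^ 2 := by
        intro θ lam
        have h := (master θ lam).symm.trans (hid θ lam)
        exact_mod_cast h
      have k1 := key (Real.pi/2) 0
      have k2 := key (Real.pi/2) 1
      have k3 := key 0 0
      have k4 := key 0 1
      have k5 := key (Real.pi/4) 0
      rw [Real.cos_pi_div_two] at k1 k2
      rw [Real.cos_zero] at k3 k4
      have hc4 : Real.cos (Real.pi/4) ^ 2 = 1/2 := by
        rw [Real.cos_pi_div_four, div_pow, Real.sq_sqrt] <;> norm_num
      rw [hc4] at k5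
      -- q1 : ξ₁ * ξ₃ = (c^2)^2
      have q1 : ξ₁ * ξ₃ = (c^2)^2 := by linear_combination k1
      have q2 : ξ₁ + ξ₂ + ξ₃ = 2*c^2 := by linear_combination q1 - k2
      have h3a : (1+ξ₁)*(1+ξ₃) = ((X^2-p^2)+c^2)^2 := by linear_combination k3
      have h5 : (1/2+ξ₁)*(1/2+ξ₃) = ((X^2-p^2)/2+c^2)^2 := by linear_combination k5
      have hs2 : (X^2-p^2)^2 = 1 := by linear_combination (-2)*h3a + 4*h5 + (-2)*q1
      have hsum : ξ₁ + ξ₃ = 2*(X^2-p^2)*c^2 := by linear_combination h3a - q1 + hs2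
      have hfac : (X^2-p^2-1)*(X^2-p^2+1) = 0 := by linear_combination hs2
      rcases mul_eq_zero.mp hfac with h | h
      · have hsum' : ξ₁ + ξ₃ = 2*c^2 := by linear_combination hsum + 2*c^2 * h
        have hd : (ξ₁ - ξ₃)^2 = 0 := by
          linear_combination (ξ₁+ξ₃+2*c^2)*hsum' - 4*q1
        have hd' : ξ₁ - ξ₃ = 0 := by
          exact pow_eq_zero_iff (two_ne_zero) |>.mp hd
        exact ⟨by linarith, by linarith⟩
      · have hsum2 : ξ₁ + ξ₃ = -(2*c^2) := by linear_combination hsum + 2*c^2 * h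
        have hcn : 0 ≤ c^2 := sq_nonneg c
        exact ⟨by linarith, by linarith⟩
    · intro hcond
      exact ⟨Real.sqrt 5 / 2, Real.sqrt ξ₁, 1/2, by norm_num, second hcond⟩
  · exact second
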